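/- Define fB (x₁, x₂) = (−x₁/8 − 2x₂, x₁ − x₂/8) on ℝ × ℝ and VB (x₁, x₂) = x₁² + 2x₂². Then every solution of fB satisfies the exponential decay bound VB(φ t) ≤ VB(φ 0)·exp(−t/4): for every t ≥ 0 and every φ : ℝ → ℝ × ℝ that has derivative fB (φ s) within Set.Icc 0 t at each s ∈ Set.Icc 0 t, one has (φ t).1² + 2·(φ t).2² ≤ ((φ 0).1² + 2·(φ 0).2²)·Real.exp (−t/4). -/

import Mathlib

/-- The vector field `fB (x₁, x₂) = (−x₁/8 − 2x₂, x₁ − x₂/8)`. -/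
noncomputable def fB (x : ℝ × ℝ) : ℝ × ℝ := (-x.1 / 8 - 2 * x.2, x.1 - x.2 / 8)

theorem lyapunov_exponential_decay_fB :
    ∀ t : ℝ, 0 ≤ t → ∀ φ : ℝ → ℝ × ℝ,
      (∀ s ∈ Set.Icc (0 : ℝ) t, HasDerivWithinAt φ (fB (φ s)) (Set.Icc (0 : ℝ) t) s) →
      (φ t).1 ^ 2 + 2 * (φ t).2 ^ 2 ≤
        ((φ 0).1 ^ 2 + 2 * (φ 0).2 ^ 2) * Real.exp (-t / 4) := by
  intro t ht φ hφ
  set g : ℝ → ℝ := fun s => ((φ s).1 ^ 2 + 2 * (φ s).2 ^ 2) * Real.exp (s / 4) with hg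
  have hd : ∀ s ∈ Set.Icc (0 : ℝ) t, HasDerivWithinAt g 0 (Set.Icc (0 : ℝ) t) s := by
    intro s hs
    have h := hφ s hs
    have h1 : HasDerivWithinAt (fun u => (φ u).1) (fB (φ s)).1 (Set.Icc (0 : ℝ) t) s := by
      have := h.hasFDerivWithinAt.fst
      refine this.hasDerivWithinAt.congr_deriv ?_
      simp
    have h2 : HasDerivWithinAt (fun u => (φ u).2) (fB (φ s)).2 (Set.Icc (0 : ℝ) t) s := by
      have := h.hasFDerivWithinAt.snd
      refine this.hasDerivWithinAt.congr_deriv ?_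
      simp
    have hV : HasDerivWithinAt (fun u => (φ u).1 ^ 2 + 2 * (φ u).2 ^ 2)
        (2 * (φ s).1 * (fB (φ s)).1 + 2 * (2 * (φ s).2 * (fB (φ s)).2))
        (Set.Icc (0 : ℝ) t) s := by
      have := (h1.pow 2).add ((h2.pow 2).const_mul 2)
      refine this.congr_deriv ?_
      norm_num
    have hE : HasDerivWithinAt (fun u : ℝ => Real.exp (u / 4)) (Real.exp (s / 4) * (1 / 4))
        (Set.Icc (0 : ℝ) t) s := by
      have := ((hasDerivAt_id s).div_const 4).exp
      simpa using this.hasDerivWithinAt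
    have := hV.mul hE
    refine this.congr_deriv ?_
    simp only [fB]
    ring
  have hcont : ContinuousOn g (Set.Icc 0 t) := fun s hs => (hd s hs).continuousWithinAt
  have hconst : g t = g 0 := by
    apply constant_of_has_deriv_right_zero hcont
      (fun s hs => (hd s (Set.Ico_subset_Icc_self hs)).mono_of_mem_nhdsWithin
        (Icc_mem_nhdsGE_of_mem hs))
    exact Set.right_mem_Icc.2 ht
  have hexp : Real.exp (t / 4) > 0 := Real.exp_pos _
  have : ((φ t).1 ^ 2 + 2 * (φ t).2 ^ 2) * Real.exp (t / 4)
      = ((φ 0).1 ^ 2 + 2 * (φ 0).2 ^ 2) := by simpa [hg] using hconst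
  have key : (φ t).1 ^ 2 + 2 * (φ t).2 ^ 2
      = ((φ 0).1 ^ 2 + 2 * (φ 0).2 ^ 2) * Real.exp (-t / 4) := by
    rw [← this]
    rw [mul_assoc, ← Real.exp_add]
    ring_nf
    simp
  exact le_of_eq key
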